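/- Let M be a positive integer, let W ∈ ℂ^{M×M} be invertible, and let h_1, …, h_M > 0 be reals. Define R_n := W^{−H} e_n e_nᵀ W^{−1} for n ∈ {1, …, M} and X := Σ_{ν=1}^M h_ν R_ν. Then X is invertible and, for every n, the multichannel Wiener filter satisfies h_n R_n X⁻¹ = W^{−H} e_n e_nᵀ Wᴴ; in particular it does not depend on h_1, …, h_M. -/

import Mathlib

open Matrix

theorem stmt_9 (M : ℕ) (hM : 0 < M)
    (W : Matrix (Fin M) (Fin M) ℂ) (hW : IsUnit W)
    (h : Fin M → ℝ) (hh : ∀ n, 0 < h n)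
    (R : Fin M → Matrix (Fin M) (Fin M) ℂ)
    (hR : ∀ n, R n = (Wᴴ)⁻¹ * Matrix.single n n (1 : ℂ) * W⁻¹)
    (X : Matrix (Fin M) (Fin M) ℂ) (hX : X = ∑ ν, (h ν : ℂ) • R ν) :
    IsUnit X ∧ ∀ n, (h n : ℂ) • R n * X⁻¹ =
      (Wᴴ)⁻¹ * Matrix.single n n (1 : ℂ) * Wᴴ := by
  have hhne : ∀ ν, (h ν : ℂ) ≠ 0 := fun ν => by exact_mod_cast (hh ν).ne'
  have hWd : IsUnit W.det := (Matrix.isUnit_iff_isUnit_det W).mp hW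
  have hWcd : IsUnit Wᴴ.det := by
    rw [Matrix.det_conjTranspose]; exact hWd.star
  set D : Matrix (Fin M) (Fin M) ℂ := Matrix.diagonal (fun ν => (h ν : ℂ)) with hD
  have hDsum : D = ∑ ν, (h ν : ℂ) • Matrix.single ν ν (1 : ℂ) := by
    ext i j
    simp only [Matrix.sum_apply, Matrix.smul_apply, Matrix.single,
      Matrix.of_apply, smul_eq_mul, hD, Matrix.diagonal_apply]
    rcases eq_or_ne i j with rfl | hij
    · rw [Finset.sum_eq_single i] <;> simp +contextual
    · rw [if_neg hij, Finset.sum_eq_zero]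
      intro ν _
      rw [if_neg, mul_zero]
      rintro ⟨rfl, rfl⟩; exact hij rfl
  have hDinv : D⁻¹ = Matrix.diagonal (fun ν => ((h ν : ℂ))⁻¹) := by
    apply Matrix.inv_eq_right_inv
    rw [hD, Matrix.diagonal_mul_diagonal]
    convert Matrix.diagonal_one using 2
    ext ν
    exact mul_inv_cancel₀ (hhne ν)
  have hXeq : X = (Wᴴ)⁻¹ * D * W⁻¹ := by
    rw [hX, hDsum, Finset.mul_sum, Finset.sum_mul]
    refine Finset.sum_congr rfl fun ν _ => ?_
    rw [hR]
    simp only [Matrix.mul_smul, Matrix.smul_mul]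
  have hone : X * (W * D⁻¹ * Wᴴ) = 1 := by
    rw [hXeq, hDinv, hD]
    calc Wᴴ⁻¹ * Matrix.diagonal (fun ν => (h ν : ℂ)) * W⁻¹ *
          (W * Matrix.diagonal (fun ν => ((h ν : ℂ))⁻¹) * Wᴴ)
        = Wᴴ⁻¹ * (Matrix.diagonal (fun ν => (h ν : ℂ)) * ((W⁻¹ * W) *
            Matrix.diagonal (fun ν => ((h ν : ℂ))⁻¹))) * Wᴴ := by
          simp only [mul_assoc]
      _ = 1 := by
          rw [Matrix.nonsing_inv_mul W hWd, one_mul, Matrix.diagonal_mul_diagonal]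
          have : (fun ν => (h ν : ℂ) * ((h ν : ℂ))⁻¹) = fun _ => (1 : ℂ) := by
            ext ν; exact mul_inv_cancel₀ (hhne ν)
          rw [this, Matrix.diagonal_one, mul_one, Matrix.nonsing_inv_mul Wᴴ hWcd]
  have hXunit : IsUnit X := (Matrix.isUnit_iff_isUnit_det X).mpr (Matrix.isUnit_det_of_right_inverse hone)
  refine ⟨hXunit, fun n => ?_⟩
  have hXinv : X⁻¹ = W * D⁻¹ * Wᴴ := Matrix.inv_eq_right_inv hone
  have key : (h n : ℂ) • (Matrix.single n n (1 : ℂ) * D⁻¹) =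
      Matrix.single n n (1 : ℂ) := by
    rw [hDinv]
    ext i j
    simp only [Matrix.smul_apply, Matrix.single, Matrix.of_apply,
      Matrix.mul_diagonal, smul_eq_mul]
    by_cases hij : n = i ∧ n = j
    · obtain ⟨rfl, rfl⟩ := hij
      simp [mul_inv_cancel₀ (hhne _)]
    · simp [if_neg hij]
  calc (h n : ℂ) • R n * X⁻¹
      = (Wᴴ)⁻¹ * ((h n : ℂ) • (Matrix.single n n (1 : ℂ) * ((W⁻¹ * W) * D⁻¹))) * Wᴴ := by
        rw [hR, hXinv]
        simp only [Matrix.smul_mul, Matrix.mul_smul, mul_assoc]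
    _ = (Wᴴ)⁻¹ * Matrix.single n n (1 : ℂ) * Wᴴ := by
        rw [Matrix.nonsing_inv_mul W hWd, one_mul, key]
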